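/- For all integers s ≥ 1 and k ≥ 1, the following determinant factorization holds: det((1/((i + j + k − 2)(i + j + k − 1)))_{i,j=1}^s) = (s! / ∏_{m=0}^{s−1}(s + k + m)) · det((1/(i + j + k − 2))_{i,j=1}^s). -/

import Mathlib

open Matrix Finset Polynomial

lemma keyL {t : Finset ℕ} {a : ℕ → ℝ} (ha : Set.InjOn a t) (Q : ℝ[X])
    (hQ : Q.degree < t.card) :
    ∑ i ∈ t, Lagrange.nodalWeight t a i * Q.eval (a i) = Q.coeff (t.card - 1) := by
  conv_rhs => rw [Lagrange.eq_interpolate ha hQ]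
  rw [Lagrange.interpolate_apply, Polynomial.finset_sum_coeff]
  refine Finset.sum_congr rfl fun i hi => ?_
  rw [Polynomial.coeff_C_mul]
  have hdeg : (Lagrange.basis t a i).natDegree = t.card - 1 := Lagrange.natDegree_basis ha hi
  have hb : (Lagrange.basis t a i).coeff (t.card - 1) = (Lagrange.basis t a i).leadingCoeff := by
    rw [← hdeg, Polynomial.coeff_natDegree]
  have hlc : (Lagrange.basis t a i).leadingCoeff = Lagrange.nodalWeight t a i := by
    unfold Lagrange.basis Lagrange.nodalWeight
    rw [Polynomial.leadingCoeff_prod]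
    refine Finset.prod_congr rfl fun j hj => ?_
    have hij : a i ≠ a j := by
      obtain ⟨hji, hjt⟩ := Finset.mem_erase.mp hj
      exact fun hh => hji (ha hjt hi hh.symm)
    rw [Lagrange.basisDivisor, Polynomial.leadingCoeff_mul, Polynomial.leadingCoeff_C,
      (Polynomial.monic_X_sub_C (a j)).leadingCoeff, mul_one]
  rw [hb, hlc, mul_comm]

noncomputable def rhoX (s k l : ℕ) : ℝ :=
  Lagrange.nodalWeight (Finset.range (s + 1)) (fun t => -((t + k : ℕ) : ℝ)) l *
    (Lagrange.nodal (Finset.range s) (fun m => (m : ℝ))).eval (-((l + k : ℕ) : ℝ))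

lemma haX (s k : ℕ) : Set.InjOn (fun t : ℕ => -((t + k : ℕ) : ℝ)) (Finset.range (s + 1)) := by
  intro x _ y _ h
  simp only [neg_inj, Nat.cast_inj] at h
  omega

lemma rho_sum (s k : ℕ) : ∑ l ∈ Finset.range (s + 1), rhoX s k l = 1 := by
  have h := keyL (haX s k) (Lagrange.nodal (Finset.range s) (fun m => (m : ℝ)))
    (by
      rw [Lagrange.degree_nodal, Finset.card_range, Finset.card_range]
      exact_mod_cast Nat.lt_succ_self s)
  rw [Finset.card_range, Nat.add_sub_cancel] at h
  have hnd : (Lagrange.nodal (Finset.range s) (fun m => (m : ℝ))).natDegree = s := by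
    rw [Lagrange.natDegree_nodal, Finset.card_range]
  have h1 : (Lagrange.nodal (Finset.range s) (fun m => (m : ℝ))).coeff s = 1 := by
    simpa [hnd] using
      (Lagrange.nodal_monic (s := Finset.range s) (v := fun m => (m : ℝ))).coeff_natDegree
  simp only [rhoX]
  rw [h, h1]

lemma rho_ortho (s k : ℕ) (hk : 1 ≤ k) {i : ℕ} (hi : i < s) :
    ∑ l ∈ Finset.range (s + 1), rhoX s k l * (((i + l + k : ℕ) : ℝ))⁻¹ = 0 := by
  set Qi := Lagrange.nodal ((Finset.range s).erase i) (fun m => (m : ℝ)) with hQi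
  have hmem : i ∈ Finset.range s := Finset.mem_range.mpr hi
  have hP : Lagrange.nodal (Finset.range s) (fun m => (m : ℝ))
      = (X - C ((i : ℕ) : ℝ)) * Qi := Lagrange.nodal_eq_mul_nodal_erase hmem
  have hcard : ((Finset.range s).erase i).card = s - 1 := by
    rw [Finset.card_erase_of_mem hmem, Finset.card_range]
  have hkey := keyL (haX s k) Qi
    (by
      rw [Lagrange.degree_nodal, hcard, Finset.card_range]
      exact_mod_cast Nat.lt_succ_of_lt (Nat.sub_lt (by omega) one_pos))
  have hc0 : Qi.coeff (#(Finset.range (s+1)) - 1) = 0 := by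
    apply Polynomial.coeff_eq_zero_of_natDegree_lt
    rw [Lagrange.natDegree_nodal, hcard, Finset.card_range]
    omega
  rw [hc0] at hkey
  have hterm : ∀ l ∈ Finset.range (s + 1),
      rhoX s k l * (((i + l + k : ℕ) : ℝ))⁻¹
        = -(Lagrange.nodalWeight (Finset.range (s + 1)) (fun t => -((t + k : ℕ) : ℝ)) l
            * Qi.eval (-((l + k : ℕ) : ℝ))) := by
    intro l _
    have hne : ((i + l + k : ℕ) : ℝ) ≠ 0 := by
      exact Nat.cast_ne_zero.mpr (show i + l + k ≠ 0 by omega)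
    have hval : -((l + k : ℕ) : ℝ) - ((i : ℕ) : ℝ) = -((i + l + k : ℕ) : ℝ) := by
      push_cast; ring
    rw [rhoX, hP, Polynomial.eval_mul, Polynomial.eval_sub, Polynomial.eval_X,
      Polynomial.eval_C, hval]
    field_simp
  rw [Finset.sum_congr rfl hterm, Finset.sum_neg_distrib, hkey, neg_zero]

lemma fact_prod (s : ℕ) : ∏ j ∈ Finset.range s, ((s : ℝ) - (j : ℕ)) = (s.factorial : ℝ) := by
  have h1 : ∀ j ∈ Finset.range s, ((s : ℝ) - (j : ℕ)) = (((s - j : ℕ) : ℕ) : ℝ) := by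
    intro j hj
    have : j ≤ s := le_of_lt (Finset.mem_range.mp hj)
    push_cast [this]
    ring
  rw [Finset.prod_congr rfl h1, ← Nat.cast_prod]
  congr 1
  calc ∏ j ∈ Finset.range s, (s - j) = ∏ j ∈ Finset.range s, (j + 1) := by
        rw [← Finset.prod_range_reflect (fun j => j + 1) s]
        exact Finset.prod_congr rfl fun j hj => by
          have := Finset.mem_range.mp hj; omega
    _ = s.factorial := Finset.prod_range_add_one_eq_factorial s

lemma rho_last (s k : ℕ) :
    rhoX s k s = (∏ m ∈ Finset.range s, ((s + k + m : ℕ) : ℝ)) / (s.factorial : ℝ) := by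
  have herase : (Finset.range (s + 1)).erase s = Finset.range s := by
    rw [Finset.range_add_one, Finset.erase_insert (by simp)]
  rw [rhoX, Lagrange.nodalWeight, herase, Lagrange.eval_nodal, ← Finset.prod_mul_distrib]
  rw [← fact_prod s, ← Finset.prod_div_distrib]
  refine Finset.prod_congr rfl fun j hj => ?_
  have hjs : j < s := Finset.mem_range.mp hj
  have hne : ((s : ℝ) - (j : ℕ)) ≠ 0 := by
    have : ((j:ℕ) : ℝ) < (s : ℝ) := by exact_mod_cast hjs
    intro h; nlinarith
  have hne2 : (-((s + k : ℕ) : ℝ) - -((j + k : ℕ) : ℝ)) = -(((s:ℝ)) - (j:ℕ)) := by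
    push_cast; ring
  rw [hne2]
  have h3 : (-((s + k : ℕ) : ℝ) - ((j : ℕ) : ℝ)) = -(((s + k + j : ℕ) : ℝ)) := by
    push_cast; ring
  rw [h3, inv_neg, neg_mul_comm, neg_neg, div_eq_inv_mul]

theorem stmt7 (s k : ℕ) (hs : 1 ≤ s) (hk : 1 ≤ k) :
    (Matrix.of fun i j : Fin s =>
        (1 : ℝ) / (((i.val + j.val + k : ℕ) : ℝ) * ((i.val + j.val + k + 1 : ℕ) : ℝ))).det =
      ((s.factorial : ℝ) / ∏ m ∈ Finset.range s, ((s + k + m : ℕ) : ℝ)) *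
        (Matrix.of fun i j : Fin s => (1 : ℝ) / ((i.val + j.val + k : ℕ) : ℝ)).det := by
  classical
  set A : Matrix (Fin s) (Fin s) ℝ := Matrix.of fun i j : Fin s =>
    (1 : ℝ) / (((i.val + j.val + k : ℕ) : ℝ) * ((i.val + j.val + k + 1 : ℕ) : ℝ)) with hA
  set B : Matrix (Fin s) (Fin s) ℝ := Matrix.of fun i j : Fin s =>
    (1 : ℝ) / ((i.val + j.val + k : ℕ) : ℝ) with hB
  have hρs : rhoX s k s ≠ 0 := by
    rw [rho_last]
    have h1 : (0:ℝ) < ∏ m ∈ Finset.range s, ((s + k + m : ℕ) : ℝ) :=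
      Finset.prod_pos fun m _ => by exact_mod_cast Nat.succ_le_of_lt (by omega)
    have h2 : (0:ℝ) < (s.factorial : ℝ) := by exact_mod_cast s.factorial_pos
    positivity
  set u : Fin s → ℝ := fun p => -(rhoX s k p.val) / rhoX s k s with hu
  set U : Matrix (Fin s) (Fin s) ℝ := Matrix.of fun p q => if q ≤ p then (1:ℝ) else 0 with hU
  set T : Matrix (Fin s) (Fin s) ℝ :=
    1 + Matrix.replicateCol Unit (fun l => -(u l)) * Matrix.replicateRow Unit (fun _ => (1:ℝ)) with hT
  have hdetU : U.det = 1 := by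
    rw [Matrix.det_of_lowerTriangular U]
    · simp [hU]
    · intro p q h
      have hpq : p < q := h
      simp [hU, not_le.mpr hpq]
  have hsumu : ∑ p : Fin s, u p = (rhoX s k s - 1) / rhoX s k s := by
    have h := rho_sum s k
    rw [Finset.sum_range_succ] at h
    have h2 : ∑ p : Fin s, u p
        = ∑ t ∈ Finset.range s, -(rhoX s k t) / rhoX s k s :=
      Fin.sum_univ_eq_sum_range (fun t => -(rhoX s k t) / rhoX s k s) s
    rw [h2]
    rw [← Finset.sum_div]
    have h3 : ∑ t ∈ Finset.range s, -rhoX s k t = rhoX s k s - 1 := by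
      rw [Finset.sum_neg_distrib]; linarith
    rw [h3]
  have hdetT : T.det = (s.factorial : ℝ) / ∏ m ∈ Finset.range s, ((s + k + m : ℕ) : ℝ) := by
    rw [hT, Matrix.det_one_add_replicateCol_mul_replicateRow]
    have : dotProduct (fun _ : Fin s => (1:ℝ)) (fun l => -(u l))
        = -∑ p : Fin s, u p := by
      simp [dotProduct]
    rw [this, hsumu, rho_last]
    have h1 : (0:ℝ) < ∏ m ∈ Finset.range s, ((s + k + m : ℕ) : ℝ) :=
      Finset.prod_pos fun m _ => by exact_mod_cast Nat.succ_le_of_lt (by omega)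
    have h2 : (0:ℝ) < (s.factorial : ℝ) := by exact_mod_cast s.factorial_pos
    rw [rho_last] at hρs
    field_simp
    ring
  have hMain : A * U = B * T := by
    ext i j
    have hg : ∀ t : ℕ, True := fun _ => trivial
    -- abbreviation
    set g : ℕ → ℝ := fun t => (((i.val + t + k : ℕ) : ℝ))⁻¹ with hgdef
    have hlhs : (A * U) i j = g j.val - g s := by
      rw [Matrix.mul_apply]
      have h1 : ∀ p : Fin s, A i p * U p j
          = if j.val ≤ p.val then g p.val - g (p.val + 1) else 0 := by
        intro p
        by_cases hle : j ≤ p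
        · have hle' : j.val ≤ p.val := hle
          rw [if_pos hle']
          have hU1 : U p j = 1 := by simp [hU, hle]
          rw [hU1, mul_one, hA]
          have hx : ((i.val + p.val + k : ℕ) : ℝ) ≠ 0 := Nat.cast_ne_zero.mpr (by omega)
          have hx1 : ((i.val + p.val + k + 1 : ℕ) : ℝ) ≠ 0 := Nat.cast_ne_zero.mpr (by omega)
          have hre : ((i.val + (p.val + 1) + k : ℕ) : ℝ) = ((i.val + p.val + k + 1 : ℕ) : ℝ) := by
            congr 1; omega
          have hre2 : ((i.val + p.val + k + 1 : ℕ) : ℝ) = ((i.val + p.val + k : ℕ) : ℝ) + 1 := by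
            push_cast; ring
          simp only [hgdef, Matrix.of_apply, hre]
          field_simp
          push_cast; ring
        · have hle' : ¬ j.val ≤ p.val := fun hc => hle (Fin.le_def.mpr hc)
          rw [if_neg hle']
          have hU0 : U p j = 0 := by simp [hU]; exact not_le.mp hle
          rw [hU0, mul_zero]
      rw [Finset.sum_congr rfl fun p _ => h1 p]
      rw [Fin.sum_univ_eq_sum_range (fun t => if j.val ≤ t then g t - g (t + 1) else 0) s]
      rw [← Finset.sum_filter]
      have hIco : (Finset.range s).filter (fun t => j.val ≤ t) = Finset.Ico j.val s := by
        ext t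
        simp only [Finset.mem_filter, Finset.mem_range, Finset.mem_Ico]
        omega
      rw [hIco, Finset.sum_Ico_eq_sub _ (le_of_lt j.isLt), Finset.sum_range_sub' g,
        Finset.sum_range_sub' g]
      ring
    have hrhs : (B * T) i j = g j.val - g s := by
      rw [Matrix.mul_apply]
      have hTe : ∀ p : Fin s, T p j = (if p = j then (1:ℝ) else 0) + -(u p) := by
        intro p
        rw [hT, Matrix.add_apply, Matrix.one_apply, Matrix.mul_apply]
        simp
      have h1 : ∀ p : Fin s, B i p * T p j
          = (if p = j then B i j else 0) + -(B i p * u p) := by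
        intro p
        rw [hTe p, mul_add]
        by_cases hpj : p = j
        · subst hpj; simp
        · simp [hpj]
      rw [Finset.sum_congr rfl fun p _ => h1 p, Finset.sum_add_distrib,
        Finset.sum_ite_eq' Finset.univ j (fun _ => B i j)]
      simp only [Finset.mem_univ, if_pos]
      have hBg : B i j = g j.val := by rw [hB]; simp [hgdef, one_div]
      have hsum2 : ∑ p : Fin s, -(B i p * u p) = -(g s) + (g j.val - g j.val) := by
        have ho := rho_ortho s k hk i.isLt
        rw [Finset.sum_range_succ] at ho
        have h2 : ∑ p : Fin s, -(B i p * u p)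
            = ∑ t ∈ Finset.range s,
                -((1 : ℝ) / ((i.val + t + k : ℕ) : ℝ) * (-(rhoX s k t) / rhoX s k s)) :=
          Fin.sum_univ_eq_sum_range
            (fun t => -((1 : ℝ) / ((i.val + t + k : ℕ) : ℝ) * (-(rhoX s k t) / rhoX s k s))) s
        rw [h2]
        have h3 : ∀ t ∈ Finset.range s,
            -((1 : ℝ) / ((i.val + t + k : ℕ) : ℝ) * (-(rhoX s k t) / rhoX s k s))
              = (rhoX s k t * ((i.val + t + k : ℕ) : ℝ)⁻¹) / rhoX s k s := by
          intro t _
          field_simp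
        rw [Finset.sum_congr rfl h3, ← Finset.sum_div]
        have h4 : ∑ t ∈ Finset.range s, rhoX s k t * ((i.val + t + k : ℕ) : ℝ)⁻¹
            = -(rhoX s k s * ((i.val + s + k : ℕ) : ℝ)⁻¹) := by linarith
        rw [h4, hgdef]
        field_simp
        ring
      rw [hsum2, hBg]
      ring
    rw [hlhs, hrhs]
  have hdet : A.det * U.det = B.det * T.det := by
    rw [← Matrix.det_mul, ← Matrix.det_mul, hMain]
  rw [hdetU, mul_one, hdetT] at hdet
  rw [hdet, mul_comm]
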